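/- Let a, b, c : ℝ → ℝ be three times differentiable functions satisfying the constraint 4b − b'' = a''c' − c''a' + 3a'c − 3ac' on ℝ, and set w = c − c''. Then for every x ∈ ℝ: w'b + (3/2) w b' + (3/2) w (a'c' − ac) = (c'b) − (c'b)'' + ½ f₂' + ½ g₂, where f₂ = b'c' − a'(c')² + 3bc + 3acc' and g₂ = bc' − 3ac² − 3a'cc'. -/

import Mathlib

/-- pointwise identity underlying the hyperbolic reformulation of the third
equation: for three times differentiable `a, b, c` satisfying the constraint
`4b - b'' = a''c' - c''a' + 3a'c - 3ac'`, with `w = c - c''`,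
`f₂ = b'c' - a'(c')² + 3bc + 3acc'` and `g₂ = bc' - 3ac² - 3a'cc'`, one has
`w'b + (3/2)wb' + (3/2)w(a'c' - ac) = (c'b) - (c'b)'' + ½ f₂' + ½ g₂`. -/
theorem hyperbolic_reformulation_third_eq (a b c : ℝ → ℝ)
    (ha : Differentiable ℝ a) (ha' : Differentiable ℝ (deriv a))
    (ha'' : Differentiable ℝ (deriv (deriv a)))
    (hb : Differentiable ℝ b) (hb' : Differentiable ℝ (deriv b))
    (hb'' : Differentiable ℝ (deriv (deriv b)))
    (hc : Differentiable ℝ c) (hc' : Differentiable ℝ (deriv c))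
    (hc'' : Differentiable ℝ (deriv (deriv c)))
    (hconstraint : ∀ x : ℝ,
      4 * b x - deriv (deriv b) x
        = deriv (deriv a) x * deriv c x - deriv (deriv c) x * deriv a x
            + 3 * deriv a x * c x - 3 * a x * deriv c x)
    (w f₂ g₂ : ℝ → ℝ)
    (hw : w = fun x => c x - deriv (deriv c) x)
    (hf₂ : f₂ = fun y => deriv b y * deriv c y - deriv a y * (deriv c y) ^ 2
      + 3 * b y * c y + 3 * a y * c y * deriv c y)
    (hg₂ : g₂ = fun y => b y * deriv c y - 3 * a y * (c y) ^ 2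
      - 3 * deriv a y * c y * deriv c y) :
    ∀ x : ℝ,
      deriv w x * b x + (3 / 2) * w x * deriv b x
          + (3 / 2) * w x * (deriv a x * deriv c x - a x * c x)
        = deriv c x * b x - deriv (deriv (fun y => deriv c y * b y)) x
            + (1 / 2) * deriv f₂ x + (1 / 2) * g₂ x := by
  intro x
  subst hw hf₂ hg₂
  -- deriv w
  have hwx : deriv (fun x => c x - deriv (deriv c) x) x
      = deriv c x - deriv (deriv (deriv c)) x := by
    exact ((hc x).hasDerivAt.sub (hc'' x).hasDerivAt).deriv
  -- first derivative of c' * b as a function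
  have hcb : deriv (fun y => deriv c y * b y)
      = fun y => deriv (deriv c) y * b y + deriv c y * deriv b y := by
    funext y
    exact ((hc' y).hasDerivAt.mul (hb y).hasDerivAt).deriv
  have hcb2 : deriv (deriv (fun y => deriv c y * b y)) x
      = deriv (deriv (deriv c)) x * b x + deriv (deriv c) x * deriv b x
        + (deriv (deriv c) x * deriv b x + deriv c x * deriv (deriv b) x) := by
    rw [hcb]
    exact (((hc'' x).hasDerivAt.mul (hb x).hasDerivAt).add
      ((hc' x).hasDerivAt.mul (hb' x).hasDerivAt)).deriv
  -- derivative of f₂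
  have hf2x : deriv (fun y => deriv b y * deriv c y - deriv a y * (deriv c y) ^ 2
      + 3 * b y * c y + 3 * a y * c y * deriv c y) x
      = (deriv (deriv b) x * deriv c x + deriv b x * deriv (deriv c) x)
        - (deriv (deriv a) x * (deriv c x) ^ 2
            + deriv a x * (2 * deriv c x * deriv (deriv c) x))
        + (3 * deriv b x * c x + 3 * b x * deriv c x)
        + ((3 * deriv a x * c x + 3 * a x * deriv c x) * deriv c x
            + 3 * a x * c x * deriv (deriv c) x) := by
    have h1 : HasDerivAt (fun y => deriv b y * deriv c y)
        (deriv (deriv b) x * deriv c x + deriv b x * deriv (deriv c) x) x :=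
      (hb' x).hasDerivAt.mul (hc' x).hasDerivAt
    have h2 : HasDerivAt (fun y => deriv a y * (deriv c y) ^ 2)
        (deriv (deriv a) x * (deriv c x) ^ 2
          + deriv a x * (2 * deriv c x * deriv (deriv c) x)) x := by
      have := (hc' x).hasDerivAt.pow 2
      have h2' : HasDerivAt (fun y => (deriv c y) ^ 2) (2 * deriv c x * deriv (deriv c) x) x := by
        exact this.congr_deriv (by simp only [Nat.cast_ofNat, Nat.add_one_sub_one, pow_one])
      exact (ha' x).hasDerivAt.mul h2'
    have h3 : HasDerivAt (fun y => 3 * b y * c y)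
        (3 * deriv b x * c x + 3 * b x * deriv c x) x := by
      have := ((hb x).hasDerivAt.const_mul (3:ℝ)).mul (hc x).hasDerivAt
      exact this
    have h4 : HasDerivAt (fun y => 3 * a y * c y * deriv c y)
        ((3 * deriv a x * c x + 3 * a x * deriv c x) * deriv c x
          + 3 * a x * c x * deriv (deriv c) x) x := by
      have h5 : HasDerivAt (fun y => 3 * a y * c y)
          (3 * deriv a x * c x + 3 * a x * deriv c x) x := by
        have := ((ha x).hasDerivAt.const_mul (3:ℝ)).mul (hc x).hasDerivAt
        exact this
      exact h5.mul (hc' x).hasDerivAt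
    exact (((h1.sub h2).add h3).add h4).deriv
  rw [hwx, hcb2, hf2x]
  linear_combination (-(deriv c x) / 2) * hconstraint x
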